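/- Let $X$ be a compact metric space and $f:X\to X$ a continuous map. For any $x,y\in X$, if $\overline{\omega}(x,f)\setminus\overline{\omega}(y,f)\ne\emptyset$, then there exists $\delta>0$ such that $\liminf_{n\to\infty}\frac{1}{n}|\{0\le i\le n-1 : d(f^i(x),f^i(y))<\delta\}|<1$. -/

import Mathlib

open Filter Metric Set
open scoped Classical Topology

noncomputable def upperDensity (A : Set ℕ) : ℝ :=
  Filter.limsup
    (fun n : ℕ => (((Finset.range n).filter (fun i => i ∈ A)).card : ℝ) / n) Filter.atTop

def HasDensityOne (A : Set ℕ) : Prop :=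
  Filter.Tendsto
    (fun n : ℕ => (((Finset.range n).filter (fun i => i ∈ A)).card : ℝ) / n) Filter.atTop (nhds 1)

def omegaBarSeq {X : Type*} [MetricSpace X] (x : ℕ → X) : Set X :=
  {y | ∀ ε > 0, 0 < upperDensity {i | dist (x i) y < ε}}

def omegaBar {X : Type*} [MetricSpace X] (f : X → X) (x : X) : Set X :=
  omegaBarSeq (fun i => f^[i] x)

theorem stmt3 {X : Type*} [MetricSpace X] [CompactSpace X] (f : X → X) (hf : Continuous f)
    (x y : X) (h : (omegaBar f x \ omegaBar f y).Nonempty) :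
    ∃ δ > 0, Filter.liminf
      (fun n : ℕ =>
        (((Finset.range n).filter (fun i => dist (f^[i] x) (f^[i] y) < δ)).card : ℝ) / n)
      Filter.atTop < 1 := by
  obtain ⟨z, hzx, hzy⟩ := h
  simp only [omegaBar, omegaBarSeq, Set.mem_setOf_eq, not_forall, not_lt] at hzy
  obtain ⟨ε, hε, hεy⟩ := hzy
  refine ⟨ε / 2, by positivity, ?_⟩
  by_contra hc
  push_neg at hc
  -- notations
  set gA : ℕ → ℝ := fun n =>
    (((Finset.range n).filter (fun i => i ∈ {i | dist (f^[i] x) z < ε / 2})).card : ℝ) / n with hgA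
  set gB : ℕ → ℝ := fun n =>
    (((Finset.range n).filter (fun i => i ∈ {i | dist (f^[i] y) z < ε})).card : ℝ) / n with hgB
  set gC : ℕ → ℝ := fun n =>
    (((Finset.range n).filter (fun i => dist (f^[i] x) (f^[i] y) < ε / 2)).card : ℝ) / n with hgC
  set gCc : ℕ → ℝ := fun n =>
    (((Finset.range n).filter (fun i => ¬ dist (f^[i] x) (f^[i] y) < ε / 2)).card : ℝ) / n
    with hgCc
  have bounds : ∀ (p : ℕ → Prop) (_ : DecidablePred p) (n : ℕ),
      0 ≤ (((Finset.range n).filter p).card : ℝ) / n ∧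
      (((Finset.range n).filter p).card : ℝ) / n ≤ 1 := by
    intro p _ n
    constructor
    · positivity
    · rcases Nat.eq_zero_or_pos n with rfl | hn
      · simp
      · rw [div_le_one (by exact_mod_cast hn)]
        exact_mod_cast (Finset.card_filter_le _ _).trans_eq (Finset.card_range n)
  have bdd_below : ∀ (g : ℕ → ℝ), (∀ n, 0 ≤ g n) → IsBoundedUnder (· ≥ ·) atTop g :=
    fun g hg => isBoundedUnder_of ⟨0, fun n => hg n⟩
  have bdd_above : ∀ (g : ℕ → ℝ), (∀ n, g n ≤ 1) → IsBoundedUnder (· ≤ ·) atTop g :=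
    fun g hg => isBoundedUnder_of ⟨1, fun n => hg n⟩
  have hA0 : ∀ n, 0 ≤ gA n := fun n => (bounds _ _ n).1
  have hA1 : ∀ n, gA n ≤ 1 := fun n => (bounds _ _ n).2
  have hB0 : ∀ n, 0 ≤ gB n := fun n => (bounds _ _ n).1
  have hB1 : ∀ n, gB n ≤ 1 := fun n => (bounds _ _ n).2
  have hC0 : ∀ n, 0 ≤ gC n := fun n => (bounds _ _ n).1
  have hC1 : ∀ n, gC n ≤ 1 := fun n => (bounds _ _ n).2
  have hCc0 : ∀ n, 0 ≤ gCc n := fun n => (bounds _ _ n).1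
  have hCc1 : ∀ n, gCc n ≤ 1 := fun n => (bounds _ _ n).2
  -- upper density of A is positive
  have hA : 0 < limsup gA atTop := hzx (ε / 2) (by positivity)
  -- limsup gCc ≤ 0
  have hCc_eq : ∀ n : ℕ, n ≥ 1 → gCc n = 1 - gC n := by
    intro n hn
    have hcard := Finset.card_filter_add_card_filter_not
      (s := Finset.range n) (p := fun i => dist (f^[i] x) (f^[i] y) < ε / 2)
    rw [Finset.card_range] at hcard
    have hn' : (n : ℝ) ≠ 0 := by exact_mod_cast Nat.one_le_iff_ne_zero.mp hn
    have : gC n + gCc n = 1 := by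
      rw [hgC, hgCc, ← add_div, div_eq_one_iff_eq hn']
      exact_mod_cast hcard
    linarith
  have hCc_le : limsup gCc atTop ≤ 0 := by
    have : limsup gCc atTop = limsup (fun n => 1 - gC n) atTop := by
      apply limsup_congr
      filter_upwards [eventually_ge_atTop 1] with n hn
      exact hCc_eq n hn
    rw [this, limsup_const_sub atTop gC 1
      ((bdd_above gC hC1).isCoboundedUnder_ge) (bdd_below gC hC0)]
    linarith [hc]
  -- pointwise : gA ≤ gB + gCc
  have hpt : ∀ n, gA n ≤ gB n + gCc n := by
    intro n
    rcases Nat.eq_zero_or_pos n with rfl | hn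
    · simp [hgA, hgB, hgCc]
    · rw [hgA, hgB, hgCc, ← add_div]
      have hsub : (Finset.range n).filter (fun i => i ∈ {i | dist (f^[i] x) z < ε / 2}) ⊆
          ((Finset.range n).filter (fun i => i ∈ {i | dist (f^[i] y) z < ε})) ∪
          ((Finset.range n).filter (fun i => ¬ dist (f^[i] x) (f^[i] y) < ε / 2)) := by
        intro i hi
        rw [Finset.mem_filter] at hi
        rw [Finset.mem_union, Finset.mem_filter, Finset.mem_filter]
        by_cases hd : dist (f^[i] x) (f^[i] y) < ε / 2
        · left
          refine ⟨hi.1, ?_⟩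
          have h1 : dist (f^[i] x) z < ε / 2 := hi.2
          have h2 := dist_triangle (f^[i] y) (f^[i] x) z
          rw [dist_comm (f^[i] x) (f^[i] y)] at hd
          show dist (f^[i] y) z < ε
          linarith
        · exact Or.inr ⟨hi.1, hd⟩
      have hcast : ((((Finset.range n).filter
            (fun i => i ∈ {i | dist (f^[i] x) z < ε / 2})).card : ℝ)) ≤
          (((Finset.range n).filter (fun i => i ∈ {i | dist (f^[i] y) z < ε})).card : ℝ) +
          (((Finset.range n).filter (fun i => ¬ dist (f^[i] x) (f^[i] y) < ε / 2)).card : ℝ) := by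
        exact_mod_cast (Finset.card_le_card hsub).trans (Finset.card_union_le _ _)
      have hn' : (0:ℝ) < n := by exact_mod_cast hn
      exact div_le_div_of_nonneg_right hcast hn'.le
  have hB : limsup gB atTop ≤ 0 := hεy
  have h1 : limsup gA atTop ≤ limsup (fun n => gB n + gCc n) atTop :=
    limsup_le_limsup (Eventually.of_forall hpt) ((bdd_below gA hA0).isCoboundedUnder_le)
      (isBoundedUnder_of ⟨2, fun n => by have := hB1 n; have := hCc1 n; simp; linarith⟩)
  have h2 : limsup (fun n => gB n + gCc n) atTop ≤ limsup gB atTop + limsup gCc atTop :=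
    limsup_add_le (bdd_below gB hB0) (bdd_above gB hB1)
      ((bdd_below gCc hCc0).isCoboundedUnder_le) (bdd_above gCc hCc1)
  linarith
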